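/- The normalized first and second complete elliptic integrals, viewed as functions of the nome, transform under Γ₀(4) as follows. Set K̂(τ) = θ₃(τ)², 𝒦ℰ(τ) = (θ₂⁴)′/θ₂⁴ (the product K̂·Ê), and Ê(τ) = 𝒦ℰ(τ)/K̂(τ). Then for every matrix (a b; c d) in SL₂(ℤ) with c ≡ 0 (mod 4) and every τ in the upper half-plane, with τ₁ = (aτ+b)/(cτ+d): K̂(τ₁) = χ₋₄(d)·(cτ+d)·K̂(τ); Ê(τ₁) = χ₋₄(d)·[(cτ+d)·Ê(τ) + c/(πi·K̂(τ))]; and 𝒦ℰ(τ₁) = (cτ+d)²·𝒦ℰ(τ) + c(cτ+d)/(πi). -/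

import Mathlib

open Complex

noncomputable section

/-- The Jacobi theta-null θ₂. -/
def theta2 (τ : ℂ) : ℂ :=
  ∑' m : ℤ, Complex.exp (2 * Real.pi * Complex.I * τ * ((m : ℂ) + 1 / 2) ^ 2)

/-- The Jacobi theta-null θ₃. -/
def theta3 (τ : ℂ) : ℂ :=
  ∑' m : ℤ, Complex.exp (2 * Real.pi * Complex.I * τ * (m : ℂ) ^ 2)

/-- The derivation f ↦ f′ = (2πi)⁻¹ df/dτ = q d/dq. -/
def dq (f : ℂ → ℂ) : ℂ → ℂ := fun τ => (2 * Real.pi * Complex.I)⁻¹ * deriv f τ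

/-- The normalized first complete elliptic integral as a function of the nome:
K̂ = θ₃². -/
def Khat (τ : ℂ) : ℂ := theta3 τ ^ 2

/-- The product K̂·Ê, equal to (θ₂⁴)′/θ₂⁴. -/
def KEhat (τ : ℂ) : ℂ := dq (fun t => theta2 t ^ 4) τ / theta2 τ ^ 4

/-- The normalized second complete elliptic integral as a function of the nome:
Ê = (K̂·Ê)/K̂. -/
def Ehat (τ : ℂ) : ℂ := KEhat τ / Khat τ

/-- The quadratic character χ₋₄. -/
def chiNeg4 (d : ℤ) : ℂ := if d % 4 = 1 then 1 else if d % 4 = 3 then -1 else 0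

namespace EIT

/-- Classical θ₃ in the nome-`e^{πiz}` convention. -/
def th3 (z : ℂ) : ℂ := jacobiTheta₂ 0 z
/-- Classical θ₄ in the nome-`e^{πiz}` convention. -/
def th4 (z : ℂ) : ℂ := jacobiTheta₂ (1/2) z
/-- Classical θ₂ in the nome-`e^{πiz}` convention. -/
def th2 (z : ℂ) : ℂ := Complex.exp (Real.pi * I * z / 4) * jacobiTheta₂ (z / 2) z

lemma theta3_eq (τ : ℂ) : theta3 τ = th3 (2 * τ) := by
  unfold theta3 th3 jacobiTheta₂
  refine tsum_congr fun m => ?_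
  rw [jacobiTheta₂_term]
  congr 1
  push_cast
  ring

lemma theta2_eq (τ : ℂ) : theta2 τ = th2 (2 * τ) := by
  unfold theta2 th2 jacobiTheta₂
  rw [← tsum_mul_left]
  refine tsum_congr fun m => ?_
  rw [jacobiTheta₂_term, ← Complex.exp_add]
  congr 1
  push_cast
  ring

lemma th3_per (z : ℂ) : th3 (z + 2) = th3 z := jacobiTheta₂_add_right 0 z

lemma th4_per (z : ℂ) : th4 (z + 2) = th4 z := jacobiTheta₂_add_right _ z

lemma exp_int_even (k : ℤ) : Complex.exp ((k : ℂ) * (2 * Real.pi * I)) = 1 := by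
  simpa using Complex.exp_int_mul_two_pi_mul_I k

lemma even_sq_sub (n : ℤ) : Even (n^2 - n) := by
  have := Int.even_mul_succ_self (n - 1); convert this using 1; ring

lemma even_sq_add (n : ℤ) : Even (n^2 + n) := by
  have := Int.even_mul_succ_self n; convert this using 1; ring

lemma th3_T (z : ℂ) : th3 (z + 1) = th4 z := by
  unfold th3 th4 jacobiTheta₂
  refine tsum_congr fun n => ?_
  rw [jacobiTheta₂_term, jacobiTheta₂_term]
  obtain ⟨k, hk⟩ := even_sq_sub n
  have hk' : ((n : ℂ)^2 - n) = 2 * k := by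
    have : ((n^2 - n : ℤ) : ℂ) = ((k + k : ℤ) : ℂ) := by rw [hk]
    push_cast at this; linear_combination this
  have : (2 * ↑Real.pi * I * ↑n * 0 + ↑Real.pi * I * ↑n ^ 2 * (z + 1) : ℂ)
      = (2 * ↑Real.pi * I * ↑n * (1/2) + ↑Real.pi * I * ↑n ^ 2 * z) + (k : ℂ) * (2 * Real.pi * I) := by
    linear_combination (Real.pi : ℂ) * I * hk'
  rw [this, Complex.exp_add, exp_int_even, mul_one]

lemma th4_T (z : ℂ) : th4 (z + 1) = th3 z := by
  unfold th3 th4 jacobiTheta₂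
  refine tsum_congr fun n => ?_
  rw [jacobiTheta₂_term, jacobiTheta₂_term]
  obtain ⟨k, hk⟩ := even_sq_add n
  have hk' : ((n : ℂ)^2 + n) = 2 * k := by
    have : ((n^2 + n : ℤ) : ℂ) = ((k + k : ℤ) : ℂ) := by rw [hk]
    push_cast at this; linear_combination this
  have : (2 * ↑Real.pi * I * ↑n * (1/2) + ↑Real.pi * I * ↑n ^ 2 * (z + 1) : ℂ)
      = (2 * ↑Real.pi * I * ↑n * 0 + ↑Real.pi * I * ↑n ^ 2 * z) + (k : ℂ) * (2 * Real.pi * I) := by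
    linear_combination (Real.pi : ℂ) * I * hk'
  rw [this, Complex.exp_add, exp_int_even, mul_one]

lemma th2_T (z : ℂ) : th2 (z + 1) = Complex.exp (Real.pi * I / 4) * th2 z := by
  unfold th2
  have h1 : Complex.exp (Real.pi * I * (z+1) / 4)
      = Complex.exp (Real.pi * I / 4) * Complex.exp (Real.pi * I * z / 4) := by
    rw [← Complex.exp_add]; congr 1; ring
  have h2 : jacobiTheta₂ ((z+1)/2) (z+1) = jacobiTheta₂ (z/2) z := by
    unfold jacobiTheta₂
    refine tsum_congr fun n => ?_
    rw [jacobiTheta₂_term, jacobiTheta₂_term]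
    obtain ⟨k, hk⟩ := even_sq_add n
    have hk' : ((n : ℂ)^2 + n) = 2 * k := by
      have : ((n^2 + n : ℤ) : ℂ) = ((k + k : ℤ) : ℂ) := by rw [hk]
      push_cast at this; linear_combination this
    have : (2 * ↑Real.pi * I * ↑n * ((z+1)/2) + ↑Real.pi * I * ↑n ^ 2 * (z + 1) : ℂ)
        = (2 * ↑Real.pi * I * ↑n * (z/2) + ↑Real.pi * I * ↑n ^ 2 * z) + (k : ℂ) * (2 * Real.pi * I) := by
      linear_combination (Real.pi : ℂ) * I * hk'
    rw [this, Complex.exp_add, exp_int_even, mul_one]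
  rw [h1, h2]; ring

lemma half_pow_ne {z : ℂ} (hz : z ≠ 0) : (-I * z) ^ (1/2 : ℂ) ≠ 0 := by
  rw [Ne, cpow_eq_zero_iff, not_and_or]
  exact Or.inl (mul_ne_zero (neg_ne_zero.mpr I_ne_zero) hz)

lemma sq_half {x : ℂ} (hx : x ≠ 0) : ((x) ^ (1/2 : ℂ)) ^ 2 = x := by
  rw [sq, ← Complex.cpow_add _ _ hx]
  norm_num

lemma th3_S {z : ℂ} (hz : z ≠ 0) : th3 (-1/z) = (-I * z) ^ (1/2 : ℂ) * th3 z := by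
  have h := jacobiTheta₂_functional_equation 0 z
  rw [zero_div] at h
  simp only [ne_eq, OfNat.ofNat_ne_zero, not_false_eq_true, zero_pow, mul_zero, zero_div,
    Complex.exp_zero, mul_one] at h
  unfold th3
  rw [h, ← mul_assoc, mul_one_div, div_self (half_pow_ne hz), one_mul]

lemma th2_S {z : ℂ} (hz : z ≠ 0) : th2 (-1/z) = (-I * z) ^ (1/2 : ℂ) * th4 z := by
  have h := jacobiTheta₂_functional_equation (-(1/2)) z
  rw [jacobiTheta₂_neg_left,
    show (-(1/2) : ℂ)/z = (-1/z)/2 by ring,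
    show (-↑Real.pi * I * (-(1/2) : ℂ)^2 / z) = Real.pi * I * (-1/z) / 4 from by (field_simp; try ring; try exact Or.inl trivial)] at h
  unfold th2 th4
  rw [h]
  field_simp [half_pow_ne hz]

lemma th4_S {z : ℂ} (hz : z ≠ 0) : th4 (-1/z) = (-I * z) ^ (1/2 : ℂ) * th2 z := by
  have h := jacobiTheta₂_functional_equation (z/2) z
  rw [show ((z/2)/z : ℂ) = 1/2 from by (field_simp),
    show (-↑Real.pi * I * ((z : ℂ)/2)^2 / z) = -(Real.pi * I * z / 4) from by (field_simp; try ring; try exact Or.inl trivial)] at h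
  unfold th2 th4
  rw [h, show ((-I*z) ^ (1/2 : ℂ)) * (cexp (↑Real.pi*I*z/4) *
      (1 / (-I*z) ^ (1/2 : ℂ) * cexp (-(↑Real.pi*I*z/4)) * jacobiTheta₂ (1/2) (-1/z)))
    = (((-I*z) ^ (1/2 : ℂ)) / ((-I*z) ^ (1/2 : ℂ))) * ((cexp (↑Real.pi*I*z/4) *
      cexp (-(↑Real.pi*I*z/4))) * jacobiTheta₂ (1/2) (-1/z)) by ring,
    div_self (half_pow_ne hz), ← Complex.exp_add]
  simp

lemma ne_of_im_pos {z : ℂ} (hz : 0 < z.im) : z ≠ 0 := by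
  intro h; rw [h] at hz; simp at hz

lemma two_mul_add_one_ne {z : ℂ} (hz : 0 < z.im) : 2*z + 1 ≠ 0 := by
  intro h
  have := congrArg Complex.im h
  simp at this; linarith

lemma aux_u {z : ℂ} (hz : 0 < z.im) : 0 < (-2 - 1/z).im := by
  have hz0 : z ≠ 0 := ne_of_im_pos hz
  have : (1/z).im = -z.im / Complex.normSq z := by
    rw [one_div, Complex.inv_im]
  have hn : 0 < Complex.normSq z := Complex.normSq_pos.mpr hz0
  have h2 : ((-2 : ℂ) - 1/z).im = 0 - (1/z).im := by
    rw [Complex.sub_im]; norm_num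
  rw [show (-2 - 1/z : ℂ) = (-2 : ℂ) - 1/z by ring, h2, this]
  have : 0 < z.im / Complex.normSq z := div_pos hz hn
  rw [neg_div]
  linarith

lemma th3_V0 {z : ℂ} (hz : 0 < z.im) : th3 (z / (2*z+1)) ^ 2 = (2*z+1) * th3 z ^ 2 := by
  have hz0 : z ≠ 0 := ne_of_im_pos hz
  have h21 : 2*z + 1 ≠ 0 := two_mul_add_one_ne hz
  set u : ℂ := -2 - 1/z with hu
  have hu0 : u ≠ 0 := ne_of_im_pos (aux_u hz)
  have h1 : -1/u = z / (2*z+1) := by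
    rw [neg_div, neg_eq_iff_eq_neg, div_eq_iff hu0, hu]
    rw [neg_mul, ← mul_neg, div_mul_eq_mul_div, eq_div_iff h21, mul_neg, mul_sub, mul_one_div_cancel hz0]
    ring
  have h2 : th3 u = th3 (-1/z) := by
    rw [show (-1/z : ℂ) = u + 2 by rw [hu]; ring, th3_per]
  have key : th3 (z / (2*z+1)) = (-I*u) ^ (1/2:ℂ) * ((-I*z) ^ (1/2:ℂ) * th3 z) := by
    rw [← h1, th3_S hu0, h2, th3_S hz0]
  rw [key]
  rw [mul_pow, mul_pow, sq_half (mul_ne_zero (neg_ne_zero.mpr I_ne_zero) hu0),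
    sq_half (mul_ne_zero (neg_ne_zero.mpr I_ne_zero) hz0)]
  have : (-I*u) * (-I*z) = 2*z+1 := by
    rw [hu]; field_simp; ring_nf; rw [Complex.I_sq]; ring
  linear_combination (th3 z)^2 * this

lemma th2_V0 {z : ℂ} (hz : 0 < z.im) : th2 (z / (2*z+1)) ^ 4 = (2*z+1)^2 * th2 z ^ 4 := by
  have hz0 : z ≠ 0 := ne_of_im_pos hz
  have h21 : 2*z + 1 ≠ 0 := two_mul_add_one_ne hz
  set u : ℂ := -2 - 1/z with hu
  have hu0 : u ≠ 0 := ne_of_im_pos (aux_u hz)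
  have h1 : -1/u = z / (2*z+1) := by
    rw [neg_div, neg_eq_iff_eq_neg, div_eq_iff hu0, hu]
    rw [neg_mul, ← mul_neg, div_mul_eq_mul_div, eq_div_iff h21, mul_neg, mul_sub, mul_one_div_cancel hz0]
    ring
  have h2 : th4 u = th4 (-1/z) := by
    rw [show (-1/z : ℂ) = u + 2 by rw [hu]; ring, th4_per]
  have key : th2 (z / (2*z+1)) = (-I*u) ^ (1/2:ℂ) * ((-I*z) ^ (1/2:ℂ) * th2 z) := by
    rw [← h1, th2_S hu0, h2, th4_S hz0]
  rw [key]
  have e4 : ∀ x : ℂ, x ≠ 0 → ((x) ^ (1/2:ℂ))^4 = x^2 := by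
    intro x hx
    rw [show (4:ℕ) = 2*2 by norm_num, pow_mul, sq_half hx]
  rw [mul_pow, mul_pow, e4 _ (mul_ne_zero (neg_ne_zero.mpr I_ne_zero) hu0),
    e4 _ (mul_ne_zero (neg_ne_zero.mpr I_ne_zero) hz0)]
  have : (-I*u) * (-I*z) = 2*z+1 := by
    rw [hu]; field_simp; ring_nf; rw [Complex.I_sq]; ring
  have h2' : (-I*u)^2 * (-I*z)^2 = (2*z+1)^2 := by
    rw [← mul_pow, this]
  linear_combination (th2 z)^4 * h2'

lemma four_mul_add_one_ne {τ : ℂ} (hτ : 0 < τ.im) : 4*τ + 1 ≠ 0 := by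
  intro h
  have := congrArg Complex.im h
  simp at this; linarith

lemma Khat_V {τ : ℂ} (hτ : 0 < τ.im) : Khat (τ / (4*τ+1)) = (4*τ+1) * Khat τ := by
  unfold Khat
  rw [theta3_eq, theta3_eq]
  have h1 : 2 * (τ / (4*τ+1)) = (2*τ) / (2*(2*τ)+1) := by
    field_simp; ring
  rw [h1, th3_V0 (by simp [Complex.mul_im]; exact hτ : 0 < (2*τ).im)]
  ring

lemma T24_V {τ : ℂ} (hτ : 0 < τ.im) :
    theta2 (τ / (4*τ+1)) ^ 4 = (4*τ+1)^2 * theta2 τ ^ 4 := by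
  rw [theta2_eq, theta2_eq]
  have h1 : 2 * (τ / (4*τ+1)) = (2*τ) / (2*(2*τ)+1) := by
    field_simp; ring
  rw [h1, th2_V0 (by simp [Complex.mul_im]; exact hτ : 0 < (2*τ).im)]
  ring

lemma theta3_shift (n : ℤ) (τ : ℂ) : theta3 (τ + n) = theta3 τ := by
  unfold theta3
  refine tsum_congr fun m => ?_
  rw [show (2 * (Real.pi:ℂ) * I * (τ + n) * (m:ℂ)^2)
      = 2 * (Real.pi:ℂ) * I * τ * (m:ℂ)^2 + ((n * m^2 : ℤ) : ℂ) * (2 * Real.pi * I) by push_cast; ring,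
    Complex.exp_add, exp_int_even, mul_one]

lemma theta2_shift (n : ℤ) (τ : ℂ) : theta2 (τ + n) ^ 4 = theta2 τ ^ 4 := by
  have key : theta2 (τ + n) = Complex.exp ((n:ℂ) * (Real.pi * I / 2)) * theta2 τ := by
    unfold theta2
    rw [← tsum_mul_left]
    refine tsum_congr fun m => ?_
    rw [← Complex.exp_add,
      show ((n:ℂ) * (Real.pi * I / 2) + 2 * (Real.pi:ℂ) * I * τ * ((m:ℂ) + 1/2)^2)
        = 2 * (Real.pi:ℂ) * I * (τ + n) * ((m:ℂ) + 1/2)^2 - ((n * (m^2 + m) : ℤ) : ℂ) * (2 * Real.pi * I) by push_cast; ring,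
      Complex.exp_sub, exp_int_even, div_one]
  rw [key, mul_pow, ← Complex.exp_nat_mul,
    show ((4:ℕ):ℂ) * ((n:ℂ) * (Real.pi * I / 2)) = (n : ℂ) * (2 * Real.pi * I) by push_cast; ring,
    exp_int_even, one_mul]
lemma tail_bound {f : ℕ → ℂ} {r : ℝ} (h0 : 0 ≤ r) (h1 : r < 1)
    (hb : ∀ n : ℕ, ‖f n‖ ≤ r ^ (n+1)) : Summable f ∧ ‖∑' n, f n‖ ≤ r / (1 - r) := by
  have hg : Summable (fun n : ℕ => r ^ (n+1)) := by
    simpa [pow_succ'] using (summable_geometric_of_lt_one h0 h1).mul_left r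
  have hs : Summable f := Summable.of_norm_bounded hg hb
  refine ⟨hs, ?_⟩
  have hn : Summable (fun n : ℕ => ‖f n‖) := hg.of_nonneg_of_le (fun _ => norm_nonneg _) hb
  refine (norm_tsum_le_tsum_norm hn).trans ?_
  refine (Summable.tsum_le_tsum hb hn hg).trans ?_
  have : ∑' n : ℕ, r ^ (n+1) = r * (1-r)⁻¹ := by
    simp_rw [pow_succ']
    rw [tsum_mul_left, tsum_geometric_of_lt_one h0 h1]
  rw [this, div_eq_mul_inv]

lemma norm_term_12 {z : ℂ} (h0 : 0 < z.im) (n : ℤ) :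
    ‖jacobiTheta₂_term n (1/2) z‖ ≤ Real.exp (-Real.pi * z.im) ^ n.natAbs := by
  rw [jacobiTheta₂_term, Complex.exp_add, norm_mul]
  have h1 : ‖cexp (2 * Real.pi * I * n * (1/2))‖ = 1 := by
    rw [Complex.norm_exp]
    have : (2 * (Real.pi:ℂ) * I * n * (1/2)).re = 0 := by
      simp [Complex.mul_re, Complex.mul_im]
    rw [this, Real.exp_zero]
  rw [h1, one_mul]
  exact norm_exp_mul_sq_le h0 n

lemma norm_term_z2 {z : ℂ} (n : ℤ) :
    ‖jacobiTheta₂_term n (z/2) z‖ = Real.exp (-Real.pi * z.im * ((n:ℝ)^2 + n)) := by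
  rw [jacobiTheta₂_term,
    show (2 * (Real.pi:ℂ) * I * n * (z/2) + Real.pi * I * n^2 * z)
      = (((n^2 + n : ℤ) : ℝ) : ℂ) * ((Real.pi : ℂ) * I * z) by push_cast; ring]
  rw [Complex.norm_exp, Complex.re_ofReal_mul]
  congr 1
  have : ((Real.pi:ℂ) * I * z).re = Real.pi * (-z.im) := by
    simp [Complex.mul_re, Complex.mul_im]
  rw [this]
  push_cast
  ring

lemma rpow_exp (z : ℂ) (k : ℕ) :
    Real.exp (-Real.pi * z.im) ^ k = Real.exp (-Real.pi * z.im * k) := by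
  rw [show (-Real.pi * z.im * k) = k * (-Real.pi * z.im) by ring, Real.exp_nat_mul]

lemma th4_ne {z : ℂ} (h0 : 0 < z.im) (hr : Real.exp (-Real.pi * z.im) < 1/4) :
    th4 z ≠ 0 := by
  set r := Real.exp (-Real.pi * z.im) with hrdef
  have hr0 : 0 < r := Real.exp_pos _
  have hr1 : r < 1 := by linarith
  have hbp : ∀ n : ℕ, ‖jacobiTheta₂_term ((n:ℤ)+1) (1/2) z‖ ≤ r ^ (n+1) := by
    intro n
    have h := norm_term_12 h0 ((n:ℤ)+1)
    have hna : ((n:ℤ)+1).natAbs = n+1 := by omega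
    rwa [hna] at h
  have hbn : ∀ n : ℕ, ‖jacobiTheta₂_term (-((n:ℤ)+1)) (1/2) z‖ ≤ r ^ (n+1) := by
    intro n
    have h := norm_term_12 h0 (-((n:ℤ)+1))
    have hna : (-((n:ℤ)+1)).natAbs = n+1 := by omega
    rwa [hna] at h
  obtain ⟨hsp, hnp⟩ := tail_bound hr0.le hr1 hbp
  obtain ⟨hsn, hnn⟩ := tail_bound hr0.le hr1 hbn
  have hsp' : Summable (fun n : ℕ => jacobiTheta₂_term (n:ℤ) (1/2) z) := by
    refine (summable_nat_add_iff 1).mp (hsp.congr fun n => ?_)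
    exact congrArg (fun m : ℤ => jacobiTheta₂_term m (1/2) z) (by push_cast; ring)
  have hab : HasSum (fun n : ℤ => jacobiTheta₂_term n (1/2) z)
      ((∑' n : ℕ, jacobiTheta₂_term (n:ℤ) (1/2) z)
        + (∑' n : ℕ, jacobiTheta₂_term (-((n:ℤ)+1)) (1/2) z)) :=
    HasSum.of_nat_of_neg_add_one hsp'.hasSum hsn.hasSum
  have hth : th4 z = (∑' n : ℕ, jacobiTheta₂_term (n:ℤ) (1/2) z)
      + (∑' n : ℕ, jacobiTheta₂_term (-((n:ℤ)+1)) (1/2) z) := by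
    unfold th4 jacobiTheta₂
    exact hab.tsum_eq
  have hsplit : (∑' n : ℕ, jacobiTheta₂_term (n:ℤ) (1/2) z)
      = 1 + ∑' n : ℕ, jacobiTheta₂_term ((n:ℤ)+1) (1/2) z := by
    rw [Summable.tsum_eq_zero_add hsp']
    have e1 : jacobiTheta₂_term (((0:ℕ):ℤ)) (1/2) z = 1 := by simp [jacobiTheta₂_term]
    rw [e1]
    congr 1
  intro hzero
  rw [hzero, hsplit] at hth
  have h1 : (1:ℝ) = ‖(∑' n : ℕ, jacobiTheta₂_term ((n:ℤ)+1) (1/2) z)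
      + (∑' n : ℕ, jacobiTheta₂_term (-((n:ℤ)+1)) (1/2) z)‖ := by
    have he : (∑' n : ℕ, jacobiTheta₂_term ((n:ℤ)+1) (1/2) z)
      + (∑' n : ℕ, jacobiTheta₂_term (-((n:ℤ)+1)) (1/2) z) = -1 := by
      linear_combination -hth
    rw [he]
    simp
  have h2 := (norm_add_le (∑' n : ℕ, jacobiTheta₂_term ((n:ℤ)+1) (1/2) z)
      (∑' n : ℕ, jacobiTheta₂_term (-((n:ℤ)+1)) (1/2) z))
  have h3 : r / (1-r) < 1/2 := by
    rw [div_lt_iff₀ (by linarith : (0:ℝ) < 1 - r)]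
    linarith
  rw [← h1] at h2
  linarith

lemma th2_ne {z : ℂ} (h0 : 0 < z.im) (hr : Real.exp (-Real.pi * z.im) < 1/4) :
    th2 z ≠ 0 := by
  set r := Real.exp (-Real.pi * z.im) with hrdef
  have hr0 : 0 < r := Real.exp_pos _
  have hr1 : r < 1 := by linarith
  have key : ∀ (n : ℤ) (m : ℕ), (m:ℝ) + 1 ≤ ((n:ℝ)^2 + n) →
      ‖jacobiTheta₂_term n (z/2) z‖ ≤ r ^ (m+1) := by
    intro n m hm
    rw [norm_term_z2, hrdef, rpow_exp]
    apply Real.exp_le_exp.mpr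
    have hπ : 0 < Real.pi * z.im := by positivity
    push_cast
    nlinarith
  have hbp : ∀ n : ℕ, ‖jacobiTheta₂_term ((n:ℤ)+1) (z/2) z‖ ≤ r ^ (n+1) := by
    intro n
    refine key _ n ?_
    push_cast
    nlinarith [sq_nonneg (n:ℝ)]
  have hbn : ∀ n : ℕ, ‖jacobiTheta₂_term (-((n:ℤ)+1)-1) (z/2) z‖ ≤ r ^ (n+1) := by
    intro n
    refine key _ n ?_
    push_cast
    nlinarith [sq_nonneg (n:ℝ)]
  obtain ⟨hsp, hnp⟩ := tail_bound hr0.le hr1 hbp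
  obtain ⟨hsn, hnn⟩ := tail_bound hr0.le hr1 hbn
  have hsp' : Summable (fun n : ℕ => jacobiTheta₂_term (n:ℤ) (z/2) z) := by
    refine (summable_nat_add_iff 1).mp (hsp.congr fun n => ?_)
    exact congrArg (fun m : ℤ => jacobiTheta₂_term m (z/2) z) (by push_cast; ring)
  have hsn' : Summable (fun n : ℕ => jacobiTheta₂_term (-((n:ℤ)+1)) (z/2) z) := by
    refine (summable_nat_add_iff 1).mp (hsn.congr fun n => ?_)
    exact congrArg (fun m : ℤ => jacobiTheta₂_term m (z/2) z) (by push_cast; ring)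
  have hab : HasSum (fun n : ℤ => jacobiTheta₂_term n (z/2) z)
      ((∑' n : ℕ, jacobiTheta₂_term (n:ℤ) (z/2) z)
        + (∑' n : ℕ, jacobiTheta₂_term (-((n:ℤ)+1)) (z/2) z)) :=
    HasSum.of_nat_of_neg_add_one hsp'.hasSum hsn'.hasSum
  have hterm0 : jacobiTheta₂_term (0:ℤ) (z/2) z = 1 := by
    simp [jacobiTheta₂_term]
  have hterm1 : jacobiTheta₂_term (-1:ℤ) (z/2) z = 1 := by
    rw [jacobiTheta₂_term,
      show (2 * (Real.pi:ℂ) * I * (((-1):ℤ):ℂ) * (z/2) + Real.pi * I * (((-1):ℤ):ℂ)^2 * z) = 0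
        by push_cast; ring]
    exact Complex.exp_zero
  have hsplit1 : (∑' n : ℕ, jacobiTheta₂_term (n:ℤ) (z/2) z)
      = 1 + ∑' n : ℕ, jacobiTheta₂_term ((n:ℤ)+1) (z/2) z := by
    rw [Summable.tsum_eq_zero_add hsp']
    rw [show jacobiTheta₂_term (((0:ℕ):ℤ)) (z/2) z = 1 from hterm0]
    congr 1
  have hsplit2 : (∑' n : ℕ, jacobiTheta₂_term (-((n:ℤ)+1)) (z/2) z)
      = 1 + ∑' n : ℕ, jacobiTheta₂_term (-((n:ℤ)+1)-1) (z/2) z := by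
    rw [Summable.tsum_eq_zero_add hsn']
    rw [show jacobiTheta₂_term (-(((0:ℕ):ℤ)+1)) (z/2) z = 1 by
      rw [show (-(((0:ℕ):ℤ)+1)) = (-1 : ℤ) by norm_num, hterm1]]
    congr 1
  have hgne : jacobiTheta₂ (z/2) z ≠ 0 := by
    intro hzero
    have hth := hab.tsum_eq
    rw [show (∑' (n : ℤ), jacobiTheta₂_term n (z/2) z) = jacobiTheta₂ (z/2) z from rfl,
      hzero, hsplit1, hsplit2] at hth
    have he : (∑' n : ℕ, jacobiTheta₂_term ((n:ℤ)+1) (z/2) z)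
        + (∑' n : ℕ, jacobiTheta₂_term (-((n:ℤ)+1)-1) (z/2) z) = -2 := by
      linear_combination -hth
    have h1 : (2:ℝ) = ‖(∑' n : ℕ, jacobiTheta₂_term ((n:ℤ)+1) (z/2) z)
        + (∑' n : ℕ, jacobiTheta₂_term (-((n:ℤ)+1)-1) (z/2) z)‖ := by
      rw [he]
      simp
    have h2 := (norm_add_le (∑' n : ℕ, jacobiTheta₂_term ((n:ℤ)+1) (z/2) z)
        (∑' n : ℕ, jacobiTheta₂_term (-((n:ℤ)+1)-1) (z/2) z))
    have h3 : r / (1-r) < 1/2 := by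
      rw [div_lt_iff₀ (by linarith : (0:ℝ) < 1 - r)]
      linarith
    rw [← h1] at h2
    linarith
  unfold th2
  exact mul_ne_zero (Complex.exp_ne_zero _) hgne

lemma th3_ne {z : ℂ} (h0 : 0 < z.im) (hr : Real.exp (-Real.pi * z.im) < 1/4) :
    th3 z ≠ 0 := by
  intro hzero
  have hb := norm_jacobiTheta_sub_one_le h0
  rw [jacobiTheta_eq_jacobiTheta₂] at hb
  have : th3 z = jacobiTheta₂ 0 z := rfl
  rw [← this, hzero] at hb
  simp only [zero_sub, norm_neg, norm_one] at hb
  set r := Real.exp (-Real.pi * z.im) with hrdef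
  have hr0 : 0 < r := Real.exp_pos _
  have h3 : 2 / (1-r) * r < 1 := by
    rw [div_mul_eq_mul_div, div_lt_one (by linarith : (0:ℝ) < 1 - r)]
    linarith
  linarith
def FF (z : ℂ) : ℂ := th2 z * th3 z * th4 z

lemma FF_T (z : ℂ) : FF (z + 1) = Complex.exp (Real.pi * I / 4) * FF z := by
  unfold FF
  rw [th2_T, th3_T, th4_T]
  ring

lemma FF_T_iff (z : ℂ) : FF (z + 1) = 0 ↔ FF z = 0 := by
  rw [FF_T, mul_eq_zero]
  simp [Complex.exp_ne_zero]

lemma FF_shift : ∀ n : ℤ, ∀ z : ℂ, (FF (z + n) = 0 ↔ FF z = 0) := by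
  intro n
  induction n using Int.induction_on with
  | zero => simp
  | succ i ih =>
    intro z
    rw [show (z + ((i:ℤ)+1 : ℤ)) = (z + (i:ℤ)) + 1 by push_cast; ring, FF_T_iff]
    exact ih z
  | pred i ih =>
    intro z
    have h := FF_T_iff (z + (-(i:ℂ)-1))
    rw [show (z + (-(i:ℂ)-1) + 1) = z + (-(i:ℂ)) by ring] at h
    rw [show ((-(i:ℤ) - 1 : ℤ) : ℂ) = -(i:ℂ)-1 by push_cast; ring]
    have ihz := ih z
    rw [show (((-(i:ℤ)) : ℤ) : ℂ) = -(i:ℂ) by push_cast; ring] at ihz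
    exact h.symm.trans ihz
  

lemma FF_S_iff {z : ℂ} (hz : 0 < z.im) : FF (-1/z) = 0 ↔ FF z = 0 := by
  have hz0 : z ≠ 0 := ne_of_im_pos hz
  have h : FF (-1/z) = ((-I*z) ^ (1/2:ℂ))^3 * FF z := by
    unfold FF
    rw [th2_S hz0, th3_S hz0, th4_S hz0]
    ring
  rw [h, mul_eq_zero]
  have : ((-I*z) ^ (1/2:ℂ))^3 ≠ 0 := pow_ne_zero _ (half_pow_ne hz0)
  tauto

lemma denom_ne {a b c d : ℤ} (h : a * d - b * c = 1) {z : ℂ} (hz : 0 < z.im) :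
    (c:ℂ) * z + d ≠ 0 := by
  intro h0
  have h1 : (c:ℝ) * z.re + d = 0 := by
    have := congrArg Complex.re h0
    simpa using this
  have h2 : (c:ℝ) * z.im = 0 := by
    have := congrArg Complex.im h0
    simpa using this
  have hc : (c:ℝ) = 0 := by
    rcases mul_eq_zero.mp h2 with h'|h'
    · exact h'
    · exfalso; rw [h'] at hz; exact lt_irrefl _ hz
  have hc' : c = 0 := by exact_mod_cast hc
  have hd : (d:ℝ) = 0 := by rw [hc, zero_mul, zero_add] at h1; exact h1
  have hd' : d = 0 := by exact_mod_cast hd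
  rw [hc', hd'] at h
  simp at h

lemma moeb_im {a b c d : ℤ} (h : a * d - b * c = 1) {z : ℂ} (hz : 0 < z.im) :
    0 < (((a:ℂ) * z + b) / ((c:ℂ) * z + d)).im := by
  have hd := denom_ne h hz
  have hn : 0 < Complex.normSq ((c:ℂ) * z + d) := Complex.normSq_pos.mpr hd
  rw [Complex.div_im]
  have e1 : ((a:ℂ) * z + b).re = (a:ℝ) * z.re + b := by simp
  have e2 : ((a:ℂ) * z + b).im = (a:ℝ) * z.im := by simp
  have e3 : ((c:ℂ) * z + d).re = (c:ℝ) * z.re + d := by simp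
  have e4 : ((c:ℂ) * z + d).im = (c:ℝ) * z.im := by simp
  rw [e1, e2, e3, e4, div_sub_div_same]
  have e5 : (a:ℝ) * z.im * ((c:ℝ) * z.re + d) - ((a:ℝ) * z.re + b) * ((c:ℝ) * z.im)
      = z.im * ((a:ℝ) * d - (b:ℝ) * c) := by ring
  have e6 : ((a:ℝ) * d - (b:ℝ) * c) = 1 := by exact_mod_cast h
  rw [e5, e6, mul_one]
  exact div_pos hz hn

lemma exists_near_pos (c d : ℤ) (hc : 0 < c) : ∃ n : ℤ, 2 * (c * n + d).natAbs ≤ c.natAbs := by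
  have hdiv := Int.mul_ediv_add_emod d c
  have h0 := Int.emod_nonneg d (by omega : c ≠ 0)
  have h1 := Int.emod_lt_of_pos d hc
  by_cases h : 2 * (d % c) ≤ c
  · refine ⟨-(d/c), ?_⟩
    have e2 : c * (-(d/c)) = -(c * (d/c)) := by ring
    have e : c * (-(d/c)) + d = d % c := by linarith
    rw [e]; omega
  · refine ⟨-(d/c) - 1, ?_⟩
    have e2 : c * (-(d/c) - 1) = -(c * (d/c)) - c := by ring
    have e : c * (-(d/c) - 1) + d = d % c - c := by linarith
    rw [e]; omega

lemma exists_near (c d : ℤ) (hc : c ≠ 0) : ∃ n : ℤ, 2 * (c * n + d).natAbs ≤ c.natAbs := by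
  rcases lt_or_gt_of_ne hc with h|h
  · obtain ⟨n, hn⟩ := exists_near_pos (-c) d (by omega)
    refine ⟨-n, ?_⟩
    rw [show c * (-n) + d = -c * n + d by ring]
    omega
  · exact exists_near_pos c d h


lemma neg_inv_im {w : ℂ} (hw : 0 < w.im) : 0 < (-1/w).im := by
  have h := moeb_im (a := 0) (b := -1) (c := 1) (d := 0) (by norm_num) hw
  simpa using h

lemma FF_orbit : ∀ N : ℕ, ∀ a b c d : ℤ, c.natAbs ≤ N → a * d - b * c = 1 →
    ∀ z : ℂ, 0 < z.im → (FF (((a:ℂ) * z + b) / ((c:ℂ) * z + d)) = 0 ↔ FF z = 0) := by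
  intro N
  induction N using Nat.strong_induction_on with
  | _ N ih =>
    intro a b c d hN hdet z hz
    by_cases hc : c = 0
    · subst hc
      rcases Int.mul_eq_one_iff_eq_one_or_neg_one.mp (by linarith : a * d = 1) with ⟨ha, hd⟩|⟨ha, hd⟩
      · subst ha; subst hd
        rw [show (((1:ℤ):ℂ) * z + b) / (((0:ℤ):ℂ) * z + ((1:ℤ):ℂ)) = z + (b:ℂ) by push_cast; ring_nf]
        exact FF_shift b z
      · subst ha; subst hd
        rw [show ((((-1):ℤ):ℂ) * z + b) / (((0:ℤ):ℂ) * z + (((-1):ℤ):ℂ)) = z + ((-b:ℤ):ℂ) from by (push_cast; field_simp; ring)]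
        exact FF_shift (-b) z
    · obtain ⟨n, hn⟩ := exists_near c d hc
      have hca : 1 ≤ c.natAbs := Int.natAbs_pos.mpr hc
      have hdet' : (a*n+b) * (-c) - (-a) * (c*n+d) = 1 := by linear_combination hdet
      have hwim : 0 < (z - n : ℂ).im := by
        rw [Complex.sub_im]
        simpa using hz
      have hw0 : (z - (n:ℂ)) ≠ 0 := ne_of_im_pos hwim
      have hvim : 0 < (-1/(z - (n:ℂ))).im := neg_inv_im hwim
      have key := ih (c*n+d).natAbs (by omega) (a*n+b) (-a) (c*n+d) (-c) le_rfl hdet'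
        (-1/(z - (n:ℂ))) hvim
      have hd2 : ((c*n+d : ℤ):ℂ) * (-1/(z - (n:ℂ))) + ((-c : ℤ):ℂ) ≠ 0 :=
        denom_ne hdet' hvim
      have hd1 : (c:ℂ) * z + d ≠ 0 := denom_ne hdet hz
      have harg : ((a:ℂ) * z + b) / ((c:ℂ) * z + d)
          = (((a*n+b : ℤ):ℂ) * (-1/(z - (n:ℂ))) + ((-a : ℤ):ℂ))
            / (((c*n+d : ℤ):ℂ) * (-1/(z - (n:ℂ))) + ((-c : ℤ):ℂ)) := by
        rw [div_eq_div_iff hd1 hd2]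
        field_simp
        push_cast
        ring
      rw [harg, key, FF_S_iff hwim,
        show z - (n:ℂ) = z + ((-n : ℤ):ℂ) by push_cast; ring]
      exact FF_shift (-n) z

lemma exp_bound {t : ℝ} (h3 : 3 ≤ 4 * t^2) (ht : 0 < t) : Real.exp (-Real.pi * t) < 1/4 := by
  have hpi := Real.pi_gt_three
  have ht8 : (4:ℝ)/5 ≤ t := by nlinarith
  have h24 : (12:ℝ)/5 ≤ Real.pi * t := by nlinarith
  have e12 : (2.2:ℝ) ≤ Real.exp 1.2 := by
    have := Real.add_one_le_exp (1.2:ℝ)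
    linarith
  have e24 : (4:ℝ) < Real.exp (12/5) := by
    have : Real.exp (12/5) = Real.exp 1.2 * Real.exp 1.2 := by
      rw [← Real.exp_add]; norm_num
    nlinarith
  have h4 : (4:ℝ) < Real.exp (Real.pi * t) :=
    lt_of_lt_of_le e24 (Real.exp_le_exp.mpr h24)
  have hinv : Real.exp (Real.pi * t) * Real.exp (-(Real.pi * t)) = 1 := by
    rw [← Real.exp_add]; simp
  have hpos : 0 < Real.exp (-(Real.pi * t)) := Real.exp_pos _
  rw [show -Real.pi * t = -(Real.pi * t) by ring]
  nlinarith [mul_lt_mul_of_pos_right h4 hpos]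

lemma FF_ne {z : ℂ} (hz : 0 < z.im) : FF z ≠ 0 := by
  set ζ : UpperHalfPlane := ⟨z, hz⟩ with hζ
  obtain ⟨g, hg⟩ := ModularGroup.exists_smul_mem_fd ζ
  have hdet : g 0 0 * g 1 1 - g 0 1 * g 1 0 = 1 := by
    have h := g.prop
    rw [Matrix.det_fin_two] at h
    exact h
  have hgz : ((g • ζ : UpperHalfPlane) : ℂ)
      = ((g 0 0 : ℂ) * (ζ:ℂ) + g 0 1) / ((g 1 0 : ℂ) * (ζ:ℂ) + g 1 1) := by
    rw [UpperHalfPlane.coe_specialLinearGroup_apply]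
    simp
  rw [show ((ζ:ℂ)) = z from rfl] at hgz
  have him : 0 < ((g • ζ : UpperHalfPlane) : ℂ).im := (g • ζ).im_pos
  have h3 : 3 ≤ 4 * ((g • ζ : UpperHalfPlane) : ℂ).im ^ 2 := by
    have := ModularGroup.three_le_four_mul_im_sq_of_mem_fd hg
    exact this
  have hr : Real.exp (-Real.pi * ((g • ζ : UpperHalfPlane) : ℂ).im) < 1/4 :=
    exp_bound h3 him
  have hFF : FF (((g • ζ : UpperHalfPlane) : ℂ)) ≠ 0 := by
    unfold FF
    exact mul_ne_zero (mul_ne_zero (th2_ne him hr) (th3_ne him hr)) (th4_ne him hr)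
  rw [hgz] at hFF
  have horb := FF_orbit (g 1 0).natAbs (g 0 0) (g 0 1) (g 1 0) (g 1 1) le_rfl hdet z hz
  exact fun h => hFF (horb.mpr h)

lemma theta2_ne {τ : ℂ} (hτ : 0 < τ.im) : theta2 τ ≠ 0 := by
  have h2 : 0 < (2*τ).im := by simp [Complex.mul_im]; exact hτ
  have := FF_ne h2
  rw [theta2_eq]
  intro h
  apply this
  unfold FF
  rw [h, zero_mul, zero_mul]

lemma theta3_ne {τ : ℂ} (hτ : 0 < τ.im) : theta3 τ ≠ 0 := by
  have h2 : 0 < (2*τ).im := by simp [Complex.mul_im]; exact hτ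
  have := FF_ne h2
  rw [theta3_eq]
  intro h
  apply this
  unfold FF
  rw [h, mul_zero, zero_mul]

def P (a b c d : ℤ) : Prop := ∀ τ : ℂ, 0 < τ.im →
  Khat (((a:ℂ) * τ + b) / ((c:ℂ) * τ + d)) = chiNeg4 d * ((c:ℂ) * τ + d) * Khat τ ∧
  theta2 (((a:ℂ) * τ + b) / ((c:ℂ) * τ + d)) ^ 4 = ((c:ℂ) * τ + d) ^ 2 * theta2 τ ^ 4

lemma Khat_shift (n : ℤ) (τ : ℂ) : Khat (τ + n) = Khat τ := by
  unfold Khat; rw [theta3_shift]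

lemma chi_shift {c : ℤ} (hc : 4 ∣ c) (n d : ℤ) : chiNeg4 (c * n + d) = chiNeg4 d := by
  obtain ⟨k, rfl⟩ := hc
  unfold chiNeg4
  have : (4 * k * n + d) % 4 = d % 4 := by
    rw [show (4 * k * n + d) = d + 4 * (k * n) by ring, Int.add_mul_emod_self_left]
  rw [this]

lemma chi_odd {d : ℤ} (hd : d % 2 = 1) : chiNeg4 d = 1 ∨ chiNeg4 d = -1 := by
  unfold chiNeg4
  have : d % 4 = 1 ∨ d % 4 = 3 := by omega
  rcases this with h|h <;> simp [h]

lemma P_T {a b c d : ℤ} (hc : 4 ∣ c) (h : P a b c d) (n : ℤ) :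
    P a (a * n + b) c (c * n + d) := by
  intro τ hτ
  have hτn : 0 < (τ + (n:ℂ)).im := by
    rw [Complex.add_im]; simpa using hτ
  have harg : ((a:ℂ) * τ + ((a * n + b : ℤ):ℂ)) / ((c:ℂ) * τ + ((c * n + d : ℤ):ℂ))
      = ((a:ℂ) * (τ + (n:ℂ)) + b) / ((c:ℂ) * (τ + (n:ℂ)) + d) := by
    push_cast; ring_nf
  have hden : ((c:ℂ) * (τ + (n:ℂ)) + d) = (c:ℂ) * τ + ((c * n + d : ℤ):ℂ) := by
    push_cast; ring
  obtain ⟨h1, h2⟩ := h (τ + (n:ℂ)) hτn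
  constructor
  · rw [harg, h1, hden, Khat_shift, chi_shift hc]
  · rw [harg, h2, hden, theta2_shift]

lemma P_V1 {a b c d : ℤ} (hdet : a * d - b * c = 1) (h : P a b c d) :
    P (a + 4 * b) b (c + 4 * d) d := by
  intro τ hτ
  have h41 : (4*τ+1) ≠ 0 := by
    intro h0
    have := congrArg Complex.im h0
    simp at this; linarith
  have hVim : 0 < (τ / (4*τ+1)).im := by
    have := moeb_im (a := 1) (b := 0) (c := 4) (d := 1) (by norm_num) hτ
    simpa using this
  have hdet2 : (a + 4*b) * d - b * (c + 4*d) = 1 := by linear_combination hdet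
  have hdenV : (c:ℂ) * (τ / (4*τ+1)) + d ≠ 0 := denom_ne hdet hVim
  have hden2 : ((c + 4*d : ℤ):ℂ) * τ + d ≠ 0 := denom_ne hdet2 hτ
  have harg : (((a + 4*b : ℤ):ℂ) * τ + b) / (((c + 4*d : ℤ):ℂ) * τ + d)
      = ((a:ℂ) * (τ / (4*τ+1)) + b) / ((c:ℂ) * (τ / (4*τ+1)) + d) := by
    rw [div_eq_div_iff hden2 hdenV]
    field_simp [show τ*4+1 ≠ 0 by rwa [mul_comm]]
    push_cast
    ring
  have hcross : ((c:ℂ) * (τ / (4*τ+1)) + d) * (4*τ+1) = ((c + 4*d : ℤ):ℂ) * τ + d := by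
    field_simp [show τ*4+1 ≠ 0 by rwa [mul_comm]]
    push_cast
    ring
  obtain ⟨h1, h2⟩ := h (τ / (4*τ+1)) hVim
  constructor
  · rw [harg, h1, Khat_V hτ]
    rw [show chiNeg4 d * ((c:ℂ) * (τ / (4*τ+1)) + d) * ((4*τ+1) * Khat τ)
        = chiNeg4 d * (((c:ℂ) * (τ / (4*τ+1)) + d) * (4*τ+1)) * Khat τ by ring, hcross]
  · rw [harg, h2, T24_V hτ]
    rw [show ((c:ℂ) * (τ / (4*τ+1)) + d)^2 * ((4*τ+1)^2 * theta2 τ ^ 4)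
        = (((c:ℂ) * (τ / (4*τ+1)) + d) * (4*τ+1))^2 * theta2 τ ^ 4 by ring, hcross]

lemma P_V1' {a b c d : ℤ} (hdet : a * d - b * c = 1) (h : P a b c d) :
    P (a - 4 * b) b (c - 4 * d) d := by
  intro τ hτ
  have h14 : (1 - 4*τ : ℂ) ≠ 0 := by
    intro h0
    have := congrArg Complex.im h0
    simp at this; linarith
  have hτ'im : 0 < (τ / (1 - 4*τ)).im := by
    have := moeb_im (a := 1) (b := 0) (c := -4) (d := 1) (by norm_num) hτ
    rw [show (((-4 : ℤ):ℂ) * τ + ((1:ℤ):ℂ)) = 1 - 4*τ by push_cast; ring] at this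
    simpa using this
  set τ' := τ / (1 - 4*τ) with hτ'
  have h41' : (4*τ' + 1 : ℂ) ≠ 0 := four_mul_add_one_ne hτ'im
  have hV : τ' / (4*τ' + 1) = τ := by
    rw [hτ']
    field_simp [show 1 - τ*4 ≠ 0 by rwa [mul_comm]]
    ring
  have hdet2 : (a - 4*b) * d - b * (c - 4*d) = 1 := by linear_combination hdet
  have hdenτ' : (c:ℂ) * τ' + d ≠ 0 := denom_ne hdet hτ'im
  have hden2 : ((c - 4*d : ℤ):ℂ) * τ + d ≠ 0 := denom_ne hdet2 hτ
  have harg : (((a - 4*b : ℤ):ℂ) * τ + b) / (((c - 4*d : ℤ):ℂ) * τ + d)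
      = ((a:ℂ) * τ' + b) / ((c:ℂ) * τ' + d) := by
    rw [div_eq_div_iff hden2 hdenτ', hτ']
    field_simp [show 1 - τ*4 ≠ 0 by rwa [mul_comm]]
    push_cast
    ring
  obtain ⟨h1, h2⟩ := h τ' hτ'im
  have hKV : Khat τ = (4*τ' + 1) * Khat τ' := by
    rw [← hV]; exact Khat_V hτ'im
  have hTV : theta2 τ ^ 4 = (4*τ' + 1)^2 * theta2 τ' ^ 4 := by
    rw [← hV]; exact T24_V hτ'im
  have hcross2 : (((c - 4*d : ℤ):ℂ) * τ + d) * (4*τ' + 1) = (c:ℂ) * τ' + d := by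
    rw [hτ']
    field_simp [show 1 - τ*4 ≠ 0 by rwa [mul_comm]]
    push_cast
    ring
  constructor
  · rw [harg, h1, hKV]
    have e : chiNeg4 d * ((c:ℂ)*τ' + d) * Khat τ'
        = chiNeg4 d * ((((c - 4*d : ℤ):ℂ) * τ + d) * (4*τ'+1)) * Khat τ' := by rw [hcross2]
    rw [e]; ring
  · rw [harg, h2, hTV]
    have e : ((c:ℂ)*τ' + d)^2 * theta2 τ' ^ 4
        = ((((c - 4*d : ℤ):ℂ) * τ + d) * (4*τ'+1))^2 * theta2 τ' ^ 4 := by rw [hcross2]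
    rw [e]; ring

lemma P_Vn {a b c d : ℤ} (hdet : a * d - b * c = 1) (h : P a b c d) :
    ∀ n : ℤ, P (a + 4 * n * b) b (c + 4 * n * d) d := by
  intro n
  induction n using Int.induction_on with
  | zero => simpa using h
  | succ i ih =>
    have hdet2 : (a + 4*i*b) * d - b * (c + 4*i*d) = 1 := by linear_combination hdet
    have := P_V1 hdet2 ih
    rw [show (a + 4*(i:ℤ)*b) + 4*b = a + 4*((i:ℤ)+1)*b by ring,
      show (c + 4*(i:ℤ)*d) + 4*d = c + 4*((i:ℤ)+1)*d by ring] at this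
    exact this
  | pred i ih =>
    have hdet2 : (a + 4*(-(i:ℤ))*b) * d - b * (c + 4*(-(i:ℤ))*d) = 1 := by linear_combination hdet
    have := P_V1' hdet2 ih
    rw [show (a + 4*(-(i:ℤ))*b) - 4*b = a + 4*(-(i:ℤ)-1)*b by ring,
      show (c + 4*(-(i:ℤ))*d) - 4*d = c + 4*(-(i:ℤ)-1)*d by ring] at this
    exact this

lemma P_base (b : ℤ) : P 1 b 0 1 ∧ P (-1) b 0 (-1) := by
  constructor
  · intro τ hτ
    have harg : (((1:ℤ):ℂ) * τ + b) / (((0:ℤ):ℂ) * τ + ((1:ℤ):ℂ)) = τ + (b:ℂ) := by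
      push_cast; ring_nf
    have hden : ((0:ℤ):ℂ) * τ + ((1:ℤ):ℂ) = 1 := by push_cast; ring
    have hchi : chiNeg4 1 = 1 := by norm_num [chiNeg4]
    refine ⟨?_, ?_⟩
    · rw [harg, Khat_shift b, hden, hchi]; ring
    · rw [harg, theta2_shift b, hden]; ring
  · intro τ hτ
    have harg : ((((-1):ℤ):ℂ) * τ + b) / (((0:ℤ):ℂ) * τ + (((-1):ℤ):ℂ)) = τ + ((-b:ℤ):ℂ) := by
      push_cast; field_simp; ring
    have hden : ((0:ℤ):ℂ) * τ + (((-1):ℤ):ℂ) = -1 := by push_cast; ring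
    have hchi : chiNeg4 (-1) = -1 := by norm_num [chiNeg4]
    refine ⟨?_, ?_⟩
    · rw [harg, Khat_shift (-b), hden, hchi]; ring
    · rw [harg, theta2_shift (-b), hden]; ring

lemma P_all : ∀ N : ℕ, ∀ a b c d : ℤ, c.natAbs ≤ N → a * d - b * c = 1 → 4 ∣ c →
    P a b c d := by
  intro N
  induction N using Nat.strong_induction_on with
  | _ N ih =>
    intro a b c d hN hdet hc4
    by_cases hc : c = 0
    · subst hc
      rcases Int.mul_eq_one_iff_eq_one_or_neg_one.mp (by linarith : a * d = 1) with ⟨ha, hd⟩|⟨ha, hd⟩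
      · subst ha; subst hd; exact (P_base b).1
      · subst ha; subst hd; exact (P_base b).2
    · obtain ⟨n, hn⟩ := exists_near c d hc
      set d' := c * n + d with hd'
      have hdetTn : a * d' - (a * n + b) * c = 1 := by rw [hd']; linear_combination hdet
      have hd'0 : d' ≠ 0 := by
        intro h0
        rw [h0] at hdetTn
        have : c ∣ 1 := ⟨-(a*n+b), by linarith⟩
        have := Int.isUnit_iff.mp (isUnit_of_dvd_one this)
        omega
      have hstrict : 2 * d'.natAbs < c.natAbs := by
        rcases Nat.lt_or_ge (2 * d'.natAbs) c.natAbs with h|h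
        · exact h
        · exfalso
          have heq : 2 * d'.natAbs = c.natAbs := by omega
          have : c = 2 * d' ∨ c = -(2 * d') := by
            rcases Int.natAbs_eq c with h1|h1 <;> rcases Int.natAbs_eq d' with h2|h2 <;> omega
          rcases this with h1|h1
          · have : d' * (a - 2 * (a*n+b)) = 1 := by rw [h1] at hdetTn; linear_combination hdetTn
            have := Int.isUnit_iff.mp (IsUnit.of_mul_eq_one _ this)
            omega
          · have : d' * (a + 2 * (a*n+b)) = 1 := by rw [h1] at hdetTn; linear_combination hdetTn
            have := Int.isUnit_iff.mp (IsUnit.of_mul_eq_one _ this)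
            omega
      obtain ⟨m, hm⟩ := exists_near (4 * d') c (by omega)
      set c'' := c + 4 * m * d' with hc''
      have hc''eq : c'' = 4 * d' * m + c := by rw [hc'']; ring
      have hc''lt : c''.natAbs < c.natAbs := by
        have h1 : 2 * c''.natAbs ≤ (4*d').natAbs := by rw [hc''eq]; exact hm
        have h2 : (4*d').natAbs = 4 * d'.natAbs := by omega
        omega
      have hc4'' : (4:ℤ) ∣ c + 4*m*d' := dvd_add hc4 ⟨m*d', by ring⟩
      have hdet'' : (a + 4*m*(a*n+b)) * d' - (a*n+b) * (c + 4*m*d') = 1 := by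
        linear_combination hdetTn
      have hP'' : P (a + 4*m*(a*n+b)) (a*n+b) (c + 4*m*d') d' := by
        refine ih c''.natAbs (by omega) _ _ _ _ ?_ hdet'' hc4''
        rw [hc'']
      have hP' := P_Vn hdet'' hP'' (-m)
      rw [show (a + 4*m*(a*n+b)) + 4*(-m)*(a*n+b) = a by ring,
        show (c + 4*m*d') + 4*(-m)*d' = c by ring] at hP'
      have hPfin := P_T hc4 hP' (-n)
      rw [show a*(-n) + (a*n+b) = b by ring,
        show c*(-n) + d' = d by rw [hd']; ring] at hPfin
      exact hPfin

lemma theta2_funeq : theta2 = fun τ => Complex.exp (Real.pi * I * τ / 2) *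
    jacobiTheta₂ τ (2 * τ) := by
  funext τ
  rw [theta2_eq, th2]
  rw [show (Real.pi : ℂ) * I * (2*τ) / 4 = Real.pi * I * τ / 2 by ring,
    show (2*τ)/2 = τ by ring]

lemma diff_theta2 {σ : ℂ} (h : 0 < σ.im) : DifferentiableAt ℂ theta2 σ := by
  rw [theta2_funeq]
  have h2 : 0 < (2*σ).im := by simp [Complex.mul_im]; exact h
  have hj : DifferentiableAt ℂ (fun t : ℂ => jacobiTheta₂ t (2*t)) σ := by
    have hF := (hasFDerivAt_jacobiTheta₂ σ h2).differentiableAt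
    have hφ : DifferentiableAt ℂ (fun t : ℂ => (t, 2*t)) σ :=
      differentiableAt_id.prodMk ((differentiableAt_id).const_mul 2)
    exact (hF.comp σ hφ : DifferentiableAt ℂ ((fun p : ℂ × ℂ => jacobiTheta₂ p.1 p.2) ∘ (fun t : ℂ => (t, 2*t))) σ)
  have he : DifferentiableAt ℂ (fun t : ℂ => Complex.exp (Real.pi * I * t / 2)) σ := by
    apply DifferentiableAt.cexp
    apply DifferentiableAt.div_const
    exact (differentiableAt_id.const_mul _)
  exact he.mul hj

lemma diff_T24 {σ : ℂ} (h : 0 < σ.im) :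
    DifferentiableAt ℂ (fun t => theta2 t ^ 4) σ := (diff_theta2 h).pow 4


end EIT

theorem elliptic_integrals_transformation_on_Gamma0_4
    (a b c d : ℤ) (hdet : a * d - b * c = 1) (hc : (4 : ℤ) ∣ c)
    (τ : ℂ) (hτ : 0 < τ.im) :
    Khat (((a : ℂ) * τ + b) / ((c : ℂ) * τ + d)) =
      chiNeg4 d * ((c : ℂ) * τ + d) * Khat τ ∧
    Ehat (((a : ℂ) * τ + b) / ((c : ℂ) * τ + d)) =
      chiNeg4 d * (((c : ℂ) * τ + d) * Ehat τ +
        (c : ℂ) / ((Real.pi : ℂ) * Complex.I * Khat τ)) ∧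
    KEhat (((a : ℂ) * τ + b) / ((c : ℂ) * τ + d)) =
      ((c : ℂ) * τ + d) ^ 2 * KEhat τ +
        (c : ℂ) * ((c : ℂ) * τ + d) / ((Real.pi : ℂ) * Complex.I) := by
  have hP := EIT.P_all c.natAbs a b c d le_rfl hdet hc
  have hD : (c:ℂ)*τ + d ≠ 0 := EIT.denom_ne hdet hτ
  have hπ : (Real.pi : ℂ) * I ≠ 0 :=
    mul_ne_zero (by exact_mod_cast Real.pi_ne_zero) I_ne_zero
  have ht2 : theta2 τ ≠ 0 := EIT.theta2_ne hτ
  have h2π : (2 : ℂ) * Real.pi * I ≠ 0 := by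
    have : ((Real.pi : ℂ)) ≠ 0 := by exact_mod_cast Real.pi_ne_zero
    simp [this, I_ne_zero]
  have hm_im : 0 < (((a:ℂ)*τ+b)/((c:ℂ)*τ+d)).im := EIT.moeb_im hdet hτ
  -- derivative identity
  have hopen : IsOpen {t : ℂ | 0 < t.im} := by
    exact isOpen_lt continuous_const Complex.continuous_im
  have hev : (fun t => theta2 (((a:ℂ)*t + b)/((c:ℂ)*t + d)) ^ 4)
      =ᶠ[nhds τ] (fun t => ((c:ℂ)*t + d)^2 * theta2 t ^ 4) :=
    Filter.eventuallyEq_of_mem (hopen.mem_nhds hτ) (fun t ht => (hP t ht).2)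
  have hderiv_eq := hev.deriv_eq
  have hmder : HasDerivAt (fun t : ℂ => ((a:ℂ)*t + b)/((c:ℂ)*t + d)) (1/((c:ℂ)*τ+d)^2) τ := by
    have h1 : HasDerivAt (fun t : ℂ => (a:ℂ)*t + b) (a:ℂ) τ := by
      simpa using ((hasDerivAt_id τ).const_mul (a:ℂ)).add_const (b:ℂ)
    have h2 : HasDerivAt (fun t : ℂ => (c:ℂ)*t + d) (c:ℂ) τ := by
      simpa using ((hasDerivAt_id τ).const_mul (c:ℂ)).add_const (d:ℂ)
    have h3 := h1.div h2 hD
    have hdc : ((a:ℂ) * d - (b:ℂ) * c) = 1 := by exact_mod_cast hdet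
    rw [show ((a:ℂ)*((c:ℂ)*τ+(d:ℂ)) - ((a:ℂ)*τ+(b:ℂ))*(c:ℂ)) = 1 from by linear_combination hdc] at h3
    exact h3
  have hdiffm : DifferentiableAt ℂ (fun t => theta2 t ^ 4) (((a:ℂ)*τ+b)/((c:ℂ)*τ+d)) :=
    EIT.diff_T24 hm_im
  have hchain := (hdiffm.hasDerivAt.comp τ hmder)
  have hlhs : deriv (fun t => theta2 (((a:ℂ)*t + b)/((c:ℂ)*t + d)) ^ 4) τ
      = deriv (fun t => theta2 t ^ 4) (((a:ℂ)*τ+b)/((c:ℂ)*τ+d)) * (1/((c:ℂ)*τ+d)^2) := by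
    have := hchain.deriv
    exact this
  have hT24τ : DifferentiableAt ℂ (fun t => theta2 t^4) τ := EIT.diff_T24 hτ
  have hrhs : deriv (fun t => ((c:ℂ)*t + d)^2 * theta2 t ^ 4) τ
      = 2*(c:ℂ)*((c:ℂ)*τ+d) * theta2 τ^4 + ((c:ℂ)*τ+d)^2 * deriv (fun t => theta2 t^4) τ := by
    have hbase : HasDerivAt (fun t : ℂ => (c:ℂ)*t + d) (c:ℂ) τ := by
      simpa using ((hasDerivAt_id τ).const_mul (c:ℂ)).add_const (d:ℂ)
    have h2 : HasDerivAt (fun t : ℂ => ((c:ℂ)*t + d)^2) (2*(c:ℂ)*((c:ℂ)*τ+d)) τ := by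
      have := hbase.fun_pow 2
      exact this.congr_deriv (by push_cast; ring)
    exact (h2.mul hT24τ.hasDerivAt).deriv
  have hDT : deriv (fun t => theta2 t ^ 4) (((a:ℂ)*τ+b)/((c:ℂ)*τ+d))
      = ((c:ℂ)*τ+d)^2 * (2*(c:ℂ)*((c:ℂ)*τ+d) * theta2 τ^4
        + ((c:ℂ)*τ+d)^2 * deriv (fun t => theta2 t^4) τ) := by
    have h := hderiv_eq
    rw [hlhs, hrhs] at h
    rw [mul_one_div, div_eq_iff (pow_ne_zero 2 hD)] at h
    linear_combination h
  have hKE : KEhat (((a:ℂ)*τ+b)/((c:ℂ)*τ+d))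
      = ((c:ℂ)*τ+d)^2 * KEhat τ + (c:ℂ)*((c:ℂ)*τ+d)/((Real.pi:ℂ)*I) := by
    unfold KEhat dq
    rw [(hP τ hτ).2, hDT]
    field_simp [hD, ht2, hπ, h2π]
    ring
  refine ⟨(hP τ hτ).1, ?_, hKE⟩
  -- Ehat part
  have hd2 : d % 2 = 1 := by
    rcases Int.even_or_odd d with h|h
    · exfalso
      obtain ⟨u, hu⟩ : Even (a*d) := h.mul_left a
      obtain ⟨k, hk⟩ := hc
      have h1 : a * d = 2*u := by rw [hu]; ring
      have h2 : b * c = 2*(2*(b*k)) := by rw [hk]; ring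
      omega
    · exact Int.odd_iff.mp h
  have hχ := EIT.chi_odd hd2
  have hKne : Khat τ ≠ 0 := pow_ne_zero 2 (EIT.theta3_ne hτ)
  have hχ0 : chiNeg4 d ≠ 0 := by rcases hχ with h|h <;> rw [h] <;> norm_num
  have hne : chiNeg4 d * ((c:ℂ)*τ+(d:ℂ)) * Khat τ ≠ 0 :=
    mul_ne_zero (mul_ne_zero hχ0 hD) hKne
  unfold Ehat
  rw [hKE, (hP τ hτ).1, div_eq_iff hne]
  rcases hχ with h|h <;> rw [h] <;> field_simp [hπ, hKne] <;> ring
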